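/- Let G = (V,A) be a finite directed graph and b : 2^V → ℝ a set function. Let σ₁ ∈ ℝ and X₁ ⊆ V with δ(X₁) > 0 and b(X₁) + σ₁δ(X₁) < 0, and suppose X₁ minimizes Z ↦ b(Z) + σ₁δ(Z) over all subsets of V. Put σ₂ = −b(X₁)/δ(X₁). Then σ₂ > σ₁, and every set X₂ ⊆ V with b(X₂) + σ₂δ(X₂) < 0 satisfies δ(X₂) < δ(X₁). -/

import Mathlib

open Finset

def inEdges {V A : Type*} [Fintype A] [DecidableEq V] (t hd : A → V) (X : Finset V) : Finset A :=
  univ.filter fun e => t e ∉ X ∧ hd e ∈ X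

def outEdges {V A : Type*} [Fintype A] [DecidableEq V] (t hd : A → V) (X : Finset V) : Finset A :=
  univ.filter fun e => t e ∈ X ∧ hd e ∉ X

def rhoF {V A : Type*} [Fintype A] [DecidableEq V] (t hd : A → V) (x : A → ℝ) (X : Finset V) : ℝ :=
  ∑ e ∈ inEdges t hd X, x e

def deltaF {V A : Type*} [Fintype A] [DecidableEq V] (t hd : A → V) (x : A → ℝ) (X : Finset V) : ℝ :=
  ∑ e ∈ outEdges t hd X, x e

def rhoC {V A : Type*} [Fintype A] [DecidableEq V] (t hd : A → V) (X : Finset V) : ℕ :=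
  (inEdges t hd X).card

def deltaC {V A : Type*} [Fintype A] [DecidableEq V] (t hd : A → V) (X : Finset V) : ℕ :=
  (outEdges t hd X).card

def partC {V A : Type*} [Fintype A] [DecidableEq V] (t hd : A → V) (X : Finset V) : ℝ :=
  (rhoC t hd X : ℝ) - (deltaC t hd X : ℝ)

def Submodular {V : Type*} [DecidableEq V] (b : Finset V → ℝ) : Prop :=
  ∀ X Y : Finset V, b (X ∪ Y) + b (X ∩ Y) ≤ b X + b Y

def IsSubmodularFlow {V A : Type*} [Fintype A] [DecidableEq V] (t hd : A → V)
    (b : Finset V → ℝ) (x : A → ℝ) : Prop :=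
  ∀ X : Finset V, rhoF t hd x X - deltaF t hd x X ≤ b X

noncomputable def spread {A : Type*} [Fintype A] [Nonempty A] (x : A → ℝ) : ℝ :=
  univ.sup' univ_nonempty x - univ.inf' univ_nonempty x

noncomputable def sigmaStar {V A : Type*} [Fintype A] [DecidableEq V] [Nonempty A]
    (t hd : A → V) (b : Finset V → ℝ) : ℝ :=
  sInf {s : ℝ | ∃ x : A → ℝ, IsSubmodularFlow t hd b x ∧ spread x = s}

theorem stmt_16 {V A : Type*} [Fintype V] [Fintype A] [DecidableEq V]
    (t hd : A → V) (b : Finset V → ℝ) (σ₁ : ℝ) (X₁ : Finset V)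
    (hδ : 0 < deltaC t hd X₁)
    (hneg : b X₁ + σ₁ * (deltaC t hd X₁ : ℝ) < 0)
    (hmin : ∀ Z : Finset V,
      b X₁ + σ₁ * (deltaC t hd X₁ : ℝ) ≤ b Z + σ₁ * (deltaC t hd Z : ℝ)) :
    σ₁ < -(b X₁) / (deltaC t hd X₁ : ℝ) ∧
    ∀ X₂ : Finset V,
      b X₂ + (-(b X₁) / (deltaC t hd X₁ : ℝ)) * (deltaC t hd X₂ : ℝ) < 0 →
      deltaC t hd X₂ < deltaC t hd X₁ := by
  set d1 : ℝ := (deltaC t hd X₁ : ℝ) with hd1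
  have hd1pos : (0:ℝ) < d1 := by rw [hd1]; exact_mod_cast hδ
  set σ₂ : ℝ := -(b X₁) / d1 with hσ₂
  have hzero : b X₁ + σ₂ * d1 = 0 := by
    rw [hσ₂, div_mul_cancel₀ _ (ne_of_gt hd1pos)]; ring
  have hσlt : σ₁ < σ₂ := by
    by_contra h
    push_neg at h
    have : b X₁ + σ₂ * d1 ≤ b X₁ + σ₁ * d1 := by nlinarith
    linarith
  refine ⟨hσlt, ?_⟩
  intro X₂ hX₂
  set d2 : ℝ := (deltaC t hd X₂ : ℝ) with hd2
  have hd2nn : (0:ℝ) ≤ d2 := by positivity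
  have hm := hmin X₂
  by_contra h
  push_neg at h
  have hle : d1 ≤ d2 := by rw [hd1, hd2]; exact_mod_cast h
  nlinarith [mul_le_mul_of_nonneg_left hle (le_of_lt (sub_pos.mpr hσlt))]
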